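/- Let G be a connected k-regular graph on n ≥ 5 vertices with k ≥ 2, and define the sequence R^(1)(G) = R(G) and R^(m)(G) = R(R^(m-1)(G)) for m ≥ 2, where R(H) = L(L(H)^c)^c. Then for every m ≥ 1, R^(m)(G) is a Ramanujan graph with diameter at most 3. -/

import Mathlib

open SimpleGraph Polynomial

noncomputable instance {V : Type*} [Finite V] {G : SimpleGraph V} {v : V} :
    Fintype (G.neighborSet v) := Fintype.ofFinite _

/-- The operation `R(G) = L(L(G)ᶜ)ᶜ`. -/
def RGraph {V : Type*} (G : SimpleGraph V) :
    SimpleGraph ((G.lineGraph)ᶜ.edgeSet) :=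
  ((G.lineGraph)ᶜ.lineGraph)ᶜ

/-- Adjacency matrix over `ℝ` of a graph on a finite vertex type. -/
noncomputable def adjM {V : Type*} [Fintype V] (G : SimpleGraph V) : Matrix V V ℝ :=
  letI := Classical.decRel G.Adj
  G.adjMatrix ℝ

/-- Characteristic polynomial of the adjacency matrix. -/
noncomputable def cpoly {V : Type*} [Finite V] (G : SimpleGraph V) : Polynomial ℝ :=
  letI := Fintype.ofFinite V
  letI := Classical.decEq V
  (adjM G).charpoly

/-- `μ` is an eigenvalue of the adjacency matrix of `G`. -/
def IsEigval {V : Type*} [Finite V] (G : SimpleGraph V) (μ : ℝ) : Prop :=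
  letI := Fintype.ofFinite V
  ∃ v : V → ℝ, v ≠ 0 ∧ (adjM G).mulVec v = μ • v

/-- `μ` is the second largest (distinct) eigenvalue of `G`. -/
def IsSecondLargestEigval {V : Type*} [Finite V] (G : SimpleGraph V) (μ : ℝ) : Prop :=
  IsEigval G μ ∧ ∃ ν : ℝ, IsEigval G ν ∧ μ < ν ∧
    ∀ ρ : ℝ, IsEigval G ρ → ρ = ν ∨ ρ ≤ μ

/-- `μ` is the smallest eigenvalue of `G`. -/
def IsSmallestEigval {V : Type*} [Finite V] (G : SimpleGraph V) (μ : ℝ) : Prop :=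
  IsEigval G μ ∧ ∀ ρ : ℝ, IsEigval G ρ → μ ≤ ρ

/-- `H` is a Ramanujan graph of degree `d`. -/
def IsRamanujan {V : Type*} [Finite V] (H : SimpleGraph V) (d : ℕ) : Prop :=
  H.Connected ∧ H.IsRegularOfDegree d ∧
    ∀ μ : ℝ, IsEigval H μ → |μ| ≠ (d : ℝ) → |μ| ≤ 2 * Real.sqrt (d - 1)

section Aux
open Finset Matrix

open scoped Classical in
noncomputable def idM (α : Type*) : Matrix α α ℝ :=
  fun a b => if a = b then 1 else 0

lemma idM_self {α : Type*} (a : α) : idM α a a = 1 := by unfold idM; rw [if_pos rfl]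

lemma idM_ne {α : Type*} {a b : α} (h : a ≠ b) : idM α a b = 0 := by unfold idM; rw [if_neg h]

lemma idM_mulVec {α : Type*} [Fintype α] (v : α → ℝ) : (idM α).mulVec v = v := by
  funext a
  classical
  simp only [Matrix.mulVec, dotProduct]
  rw [Finset.sum_congr rfl fun b _ => show idM α a b * v b = if b = a then v b else 0 by
    by_cases h : a = b
    · subst h; rw [idM_self, if_pos rfl, one_mul]
    · rw [idM_ne h, if_neg (Ne.symm h), zero_mul]]
  rw [Finset.sum_ite_eq' Finset.univ a v, if_pos (Finset.mem_univ a)]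

section A
variable {V : Type*} [Fintype V] (G : SimpleGraph V)

lemma adjM_of_adj {a b : V} (h : G.Adj a b) : adjM G a b = 1 := by
  unfold adjM; rw [adjMatrix_apply, if_pos h]

lemma adjM_of_not_adj {a b : V} (h : ¬ G.Adj a b) : adjM G a b = 0 := by
  unfold adjM; rw [adjMatrix_apply, if_neg h]

lemma adjM_cases (a b : V) : adjM G a b = 1 ∧ G.Adj a b ∨ adjM G a b = 0 ∧ ¬ G.Adj a b := by
  by_cases h : G.Adj a b
  · exact Or.inl ⟨adjM_of_adj G h, h⟩
  · exact Or.inr ⟨adjM_of_not_adj G h, h⟩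

lemma adjM_nonneg (a b : V) : 0 ≤ adjM G a b := by
  rcases adjM_cases G a b with ⟨h, _⟩ | ⟨h, _⟩ <;> rw [h] <;> norm_num

lemma adjM_symm (a b : V) : adjM G a b = adjM G b a := by
  by_cases h : G.Adj a b
  · rw [adjM_of_adj G h, adjM_of_adj G h.symm]
  · rw [adjM_of_not_adj G h, adjM_of_not_adj G (fun h' => h h'.symm)]

lemma adjM_rowsum (a : V) : ∑ b, adjM G a b = (G.degree a : ℝ) := by
  classical
  rw [Finset.sum_congr rfl (fun b _ => show adjM G a b = if G.Adj a b then (1:ℝ) else 0 by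
    rcases adjM_cases G a b with ⟨h, ha⟩ | ⟨h, ha⟩ <;> simp [h, ha])]
  rw [Finset.sum_boole]
  have : (univ.filter (G.Adj a)) = G.neighborFinset a := by ext b; simp
  rw [this, card_neighborFinset_eq_degree]

lemma adjM_colsum (b : V) : ∑ a, adjM G a b = (G.degree b : ℝ) := by
  rw [Finset.sum_congr rfl (fun a _ => adjM_symm G a b), adjM_rowsum]

-- regularity conversions
lemma rowsum_of_regular {k : ℕ} (h : G.IsRegularOfDegree k) (a : V) :
    ∑ b, adjM G a b = (k : ℝ) := by rw [adjM_rowsum, h a]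

lemma regular_of_rowsum (k : ℕ) (h : ∀ a, ∑ b, adjM G a b = (k : ℝ)) :
    G.IsRegularOfDegree k := by
  intro a
  have := (adjM_rowsum G a).symm.trans (h a)
  exact_mod_cast this

-- complement entrywise mulVec formula
lemma adjM_compl_mulVec (v : V → ℝ) (a : V) :
    (adjM Gᶜ).mulVec v a = (∑ b, v b) - v a - (adjM G).mulVec v a := by
  classical
  simp only [Matrix.mulVec, dotProduct]
  have h1 : ∀ b, adjM Gᶜ a b * v b = v b - (if a = b then v b else 0) - adjM G a b * v b := by
    intro b
    by_cases hab : a = b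
    · subst hab
      rw [adjM_of_not_adj Gᶜ (Gᶜ.loopless.irrefl a), adjM_of_not_adj G (G.loopless.irrefl a)]
      simp
    · by_cases h : G.Adj a b
      · rw [adjM_of_not_adj Gᶜ (by simp [compl_adj, h]), adjM_of_adj G h]
        simp [hab]
      · rw [adjM_of_adj Gᶜ (by simp [compl_adj, hab, h]), adjM_of_not_adj G h]
        simp [hab]
  rw [Finset.sum_congr rfl (fun b _ => h1 b)]
  rw [Finset.sum_sub_distrib, Finset.sum_sub_distrib, Finset.sum_ite_eq univ a v]
  simp

end A

section B
variable {V : Type*} [Fintype V] (G : SimpleGraph V)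

lemma sum_mulVec (v : V → ℝ) :
    ∑ a, (adjM G).mulVec v a = ∑ b, (G.degree b : ℝ) * v b := by
  simp only [Matrix.mulVec, dotProduct]
  rw [Finset.sum_comm]
  exact Finset.sum_congr rfl fun b _ => by rw [← Finset.sum_mul, adjM_colsum]

lemma compl_top_or_perp {r : ℝ} (hreg : ∀ a, ∑ b, adjM G a b = r) {v : V → ℝ} {μ : ℝ}
    (h : (adjM Gᶜ).mulVec v = μ • v) (hv : v ≠ 0) :
    μ = (Fintype.card V : ℝ) - 1 - r ∨ ∑ a, v a = 0 := by
  classical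
  have hdeg : ∀ b, (G.degree b : ℝ) = r := fun b => by rw [← adjM_rowsum, hreg]
  have e1 : ∑ b, (G.degree b : ℝ) * v b = r * ∑ b, v b := by
    rw [Finset.sum_congr rfl fun b _ => by rw [hdeg b]]
    rw [← Finset.mul_sum]
  have hsum : ∑ a, (adjM Gᶜ).mulVec v a = ((Fintype.card V : ℝ) - 1 - r) * ∑ a, v a := by
    rw [Finset.sum_congr rfl fun a _ => adjM_compl_mulVec G v a]
    rw [Finset.sum_sub_distrib, Finset.sum_sub_distrib, Finset.sum_const, _root_.sum_mulVec, e1]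
    simp [Finset.card_univ]
    ring
  rw [h] at hsum
  simp only [Pi.smul_apply, smul_eq_mul, ← Finset.mul_sum] at hsum
  by_cases hS : ∑ a, v a = 0
  · exact Or.inr hS
  · exact Or.inl (mul_right_cancel₀ hS hsum)

lemma compl_transfer {v : V → ℝ} {μ : ℝ} (hS : ∑ a, v a = 0)
    (h : (adjM Gᶜ).mulVec v = μ • v) :
    (adjM G).mulVec v = (-1 - μ) • v := by
  funext a
  have := congrFun h a
  rw [adjM_compl_mulVec G v a, hS] at this
  simp only [Pi.smul_apply, smul_eq_mul] at this ⊢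
  linarith

end B

section C
variable {V : Type*} [Fintype V] (G : SimpleGraph V) [Fintype ↥G.edgeSet]

open scoped Classical in
noncomputable def eB : Matrix V ↥G.edgeSet ℝ :=
  fun a e => if a ∈ (e : Sym2 V) then 1 else 0

lemma eB_of_mem {a : V} {e : ↥G.edgeSet} (h : a ∈ (e : Sym2 V)) : eB G a e = 1 := by
  unfold eB; rw [if_pos h]

lemma eB_of_not_mem {a : V} {e : ↥G.edgeSet} (h : ¬ a ∈ (e : Sym2 V)) : eB G a e = 0 := by
  unfold eB; rw [if_neg h]

lemma eB_cases (a : V) (e : ↥G.edgeSet) :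
    eB G a e = 1 ∧ a ∈ (e : Sym2 V) ∨ eB G a e = 0 ∧ ¬ a ∈ (e : Sym2 V) := by
  by_cases h : a ∈ (e : Sym2 V)
  · exact Or.inl ⟨eB_of_mem G h, h⟩
  · exact Or.inr ⟨eB_of_not_mem G h, h⟩

lemma eB_nonneg (a : V) (e : ↥G.edgeSet) : 0 ≤ eB G a e := by
  rcases eB_cases G a e with ⟨h, _⟩ | ⟨h, _⟩ <;> rw [h] <;> norm_num

-- the two endpoints of an edge
lemma edge_exists (e : ↥G.edgeSet) :
    ∃ x y : V, G.Adj x y ∧ (e : Sym2 V) = s(x, y) := by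
  obtain ⟨e, he⟩ := e
  induction e with
  | _ x y => exact ⟨x, y, (G.mem_edgeSet).mp he, rfl⟩

lemma eB_colsum (e : ↥G.edgeSet) : ∑ a, eB G a e = 2 := by
  classical
  obtain ⟨x, y, hadj, hxy⟩ := edge_exists G e
  rw [Finset.sum_congr rfl (fun a _ => show eB G a e = if a ∈ (e : Sym2 V) then (1:ℝ) else 0 by
    rcases eB_cases G a e with ⟨h, ha⟩ | ⟨h, ha⟩ <;> simp [h, ha])]
  rw [Finset.sum_boole]
  have : Finset.univ.filter (fun a => a ∈ (e : Sym2 V)) = {x, y} := by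
    ext a
    simp [hxy, Sym2.mem_iff]
  rw [this, Finset.card_insert_of_notMem (by simp [hadj.ne]), Finset.card_singleton]
  norm_num

lemma eB_rowsum (a : V) : ∑ e, eB G a e = (G.degree a : ℝ) := by
  classical
  rw [Finset.sum_congr rfl (fun e _ => show eB G a e = if a ∈ (e : Sym2 V) then (1:ℝ) else 0 by
    rcases eB_cases G a e with ⟨h, ha⟩ | ⟨h, ha⟩ <;> simp [h, ha])]
  rw [Finset.sum_boole]
  have : (Finset.univ.filter (fun e : ↥G.edgeSet => a ∈ (e : Sym2 V))).card
      = (G.incidenceFinset a).card := by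
    refine Finset.card_bij (fun e _ => (e : Sym2 V)) ?_ ?_ ?_
    · intro e he
      rw [mem_incidenceFinset]
      exact ⟨e.2, (Finset.mem_filter.mp he).2⟩
    · intro e _ f _ h
      exact Subtype.ext h
    · intro e he
      rw [mem_incidenceFinset] at he
      exact ⟨⟨e, he.1⟩, Finset.mem_filter.mpr ⟨Finset.mem_univ _, he.2⟩, rfl⟩
  rw [this, card_incidenceFinset_eq_degree]

lemma two_mul_card_edges {k : ℕ} (hreg : G.IsRegularOfDegree k) :
    2 * Fintype.card ↥G.edgeSet = Fintype.card V * k := by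
  have : ∑ a : V, ∑ e : ↥G.edgeSet, eB G a e = ∑ e : ↥G.edgeSet, ∑ a : V, eB G a e :=
    Finset.sum_comm
  rw [Finset.sum_congr rfl fun a _ => eB_rowsum G a,
      Finset.sum_congr rfl fun e (_ : e ∈ Finset.univ) => eB_colsum G e] at this
  simp only [Finset.sum_const, Finset.card_univ, nsmul_eq_mul] at this
  have h3 : ∑ a : V, (G.degree a : ℝ) = (Fintype.card V : ℝ) * k := by
    rw [Finset.sum_congr rfl fun a (_ : a ∈ Finset.univ) => by rw [hreg a]]
    simp [Finset.card_univ, mul_comm]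
  have h4 : ((2 * Fintype.card ↥G.edgeSet : ℕ) : ℝ) = ((Fintype.card V * k : ℕ) : ℝ) := by
    push_cast
    linarith [this, h3]
  exact_mod_cast h4

end C

section D
variable {V : Type*} [Fintype V] (G : SimpleGraph V) [Fintype ↥G.edgeSet]

lemma shared_unique {e f : ↥G.edgeSet} (hef : e ≠ f) {a b : V}
    (ha : a ∈ (e : Sym2 V) ∧ a ∈ (f : Sym2 V)) (hb : b ∈ (e : Sym2 V) ∧ b ∈ (f : Sym2 V)) :
    a = b := by
  by_contra hab
  exact hef (Subtype.ext (Sym2.eq_of_ne_mem hab ha.1 hb.1 ha.2 hb.2))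

lemma BtB : (eB G)ᵀ * eB G = adjM (G.lineGraph) + (2 : ℝ) • idM ↥G.edgeSet := by
  classical
  ext e f
  rw [Matrix.mul_apply]
  simp only [Matrix.transpose_apply, Matrix.add_apply, Matrix.smul_apply, smul_eq_mul]
  by_cases hef : e = f
  · subst hef
    rw [adjM_of_not_adj _ (G.lineGraph.loopless.irrefl e), idM_self]
    rw [Finset.sum_congr rfl fun a _ => show eB G a e * eB G a e = eB G a e by
      rcases eB_cases G a e with ⟨h, _⟩ | ⟨h, _⟩ <;> rw [h] <;> norm_num]
    rw [eB_colsum]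
    simp
  · rw [idM_ne hef, mul_zero, add_zero]
    by_cases hsh : ∃ v, v ∈ (e : Sym2 V) ∧ v ∈ (f : Sym2 V)
    · obtain ⟨v, hv⟩ := hsh
      have hadj : (G.lineGraph).Adj e f := by
        rw [lineGraph_adj_iff_exists]
        exact ⟨hef, v, hv.1, hv.2⟩
      rw [adjM_of_adj _ hadj]
      rw [Finset.sum_congr rfl fun a _ =>
        show eB G a e * eB G a f = if a = v then (1:ℝ) else 0 by
          by_cases hav : a = v
          · subst hav
            rw [eB_of_mem G hv.1, eB_of_mem G hv.2, if_pos rfl]; norm_num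
          · rw [if_neg hav]
            by_cases h1 : a ∈ (e : Sym2 V)
            · by_cases h2 : a ∈ (f : Sym2 V)
              · exact absurd (shared_unique G hef ⟨h1, h2⟩ hv) hav
              · rw [eB_of_not_mem G h2, mul_zero]
            · rw [eB_of_not_mem G h1, zero_mul]]
      simp
    · push_neg at hsh
      have hnadj : ¬ (G.lineGraph).Adj e f := by
        rw [lineGraph_adj_iff_exists]
        rintro ⟨-, v, h1, h2⟩
        exact hsh v h1 h2
      rw [adjM_of_not_adj _ hnadj]
      apply Finset.sum_eq_zero
      intro a _
      by_cases h1 : a ∈ (e : Sym2 V)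
      · rw [eB_of_not_mem G (hsh a h1), mul_zero]
      · rw [eB_of_not_mem G h1, zero_mul]

lemma BBt {k : ℕ} (hreg : G.IsRegularOfDegree k) :
    eB G * (eB G)ᵀ = adjM G + (k : ℝ) • idM V := by
  classical
  ext a b
  rw [Matrix.mul_apply]
  simp only [Matrix.transpose_apply, Matrix.add_apply, Matrix.smul_apply, smul_eq_mul]
  by_cases hab : a = b
  · subst hab
    rw [adjM_of_not_adj _ (G.loopless.irrefl a), idM_self]
    rw [Finset.sum_congr rfl fun e _ => show eB G a e * eB G a e = eB G a e by
      rcases eB_cases G a e with ⟨h, _⟩ | ⟨h, _⟩ <;> rw [h] <;> norm_num]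
    rw [eB_rowsum, hreg a]
    simp
  · rw [idM_ne hab, mul_zero, add_zero]
    by_cases hadj : G.Adj a b
    · rw [adjM_of_adj _ hadj]
      have hmem : s(a, b) ∈ G.edgeSet := (G.mem_edgeSet).mpr hadj
      rw [Finset.sum_congr rfl fun e _ =>
        show eB G a e * eB G b e = if e = (⟨s(a,b), hmem⟩ : ↥G.edgeSet) then (1:ℝ) else 0 by
          by_cases he : e = (⟨s(a,b), hmem⟩ : ↥G.edgeSet)
          · subst he
            rw [eB_of_mem G (by simp), eB_of_mem G (by simp), if_pos rfl]; norm_num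
          · rw [if_neg he]
            by_cases h1 : a ∈ (e : Sym2 V)
            · by_cases h2 : b ∈ (e : Sym2 V)
              · exact absurd (Subtype.ext
                  (Sym2.eq_of_ne_mem hab h1 h2 (by simp) (by simp))) he
              · rw [eB_of_not_mem G h2, mul_zero]
            · rw [eB_of_not_mem G h1, zero_mul]]
      simp
    · rw [adjM_of_not_adj _ hadj]
      apply Finset.sum_eq_zero
      intro e _
      by_cases h1 : a ∈ (e : Sym2 V)
      · by_cases h2 : b ∈ (e : Sym2 V)
        · exfalso
          have : (e : Sym2 V) = s(a, b) := Sym2.eq_of_ne_mem hab h1 h2 (by simp) (by simp)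
          exact hadj ((G.mem_edgeSet).mp (this ▸ e.2))
        · rw [eB_of_not_mem G h2, mul_zero]
      · rw [eB_of_not_mem G h1, zero_mul]

end D

section E
variable {V : Type*} [Fintype V] (G : SimpleGraph V) [Fintype ↥G.edgeSet]

lemma dot_self_nonneg {α : Type*} [Fintype α] (v : α → ℝ) : 0 ≤ dotProduct v v :=
  Finset.sum_nonneg fun i _ => mul_self_nonneg (v i)

lemma dot_self_pos {α : Type*} [Fintype α] {v : α → ℝ} (hv : v ≠ 0) :
    0 < dotProduct v v := by
  obtain ⟨i, hi⟩ := Function.ne_iff.mp hv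
  apply Finset.sum_pos' (fun j _ => mul_self_nonneg (v j))
  have hi' : v i ≠ 0 := by simpa using hi
  exact ⟨i, Finset.mem_univ i, mul_self_pos.mpr hi'⟩

lemma BtB_mulVec {w : ↥G.edgeSet → ℝ} {θ : ℝ}
    (h : (adjM G.lineGraph).mulVec w = θ • w) :
    ((eB G)ᵀ).mulVec ((eB G).mulVec w) = (θ + 2) • w := by
  have h1 : ((eB G)ᵀ * eB G).mulVec w = (θ + 2) • w := by
    rw [BtB, Matrix.add_mulVec, h, Matrix.smul_mulVec, idM_mulVec]
    funext e
    simp only [Pi.add_apply, Pi.smul_apply, smul_eq_mul]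
    ring
  rw [Matrix.mulVec_mulVec, h1]

lemma line_eig_lb {w : ↥G.edgeSet → ℝ} {θ : ℝ} (hw : w ≠ 0)
    (h : (adjM G.lineGraph).mulVec w = θ • w) : -2 ≤ θ := by
  have h1 := BtB_mulVec G h
  have h2 : dotProduct w (((eB G)ᵀ).mulVec ((eB G).mulVec w))
      = dotProduct ((eB G).mulVec w) ((eB G).mulVec w) := by
    rw [Matrix.dotProduct_mulVec, Matrix.vecMul_transpose]
  rw [h1] at h2
  have h3 : dotProduct w ((θ + 2) • w) = (θ + 2) * dotProduct w w := by
    simp [dotProduct, Finset.mul_sum]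
    exact Finset.sum_congr rfl fun i _ => by ring
  rw [h3] at h2
  have h4 := dot_self_nonneg ((eB G).mulVec w)
  have h5 := dot_self_pos hw
  nlinarith

lemma line_eig_transfer {k : ℕ} (hreg : G.IsRegularOfDegree k)
    {w : ↥G.edgeSet → ℝ} {θ : ℝ} (hw : w ≠ 0)
    (h : (adjM G.lineGraph).mulVec w = θ • w) (hθ : θ ≠ -2)
    (hS : ∑ e, w e = 0) :
    ∃ u : V → ℝ, u ≠ 0 ∧ ∑ a, u a = 0 ∧ (adjM G).mulVec u = (θ + 2 - k) • u := by
  classical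
  set u := (eB G).mulVec w with hu
  have hu0 : u ≠ 0 := by
    intro h0
    have h1 : ((eB G)ᵀ).mulVec u = (θ + 2) • w := BtB_mulVec G h
    rw [h0, Matrix.mulVec_zero] at h1
    rcases smul_eq_zero.mp h1.symm with h2 | h2
    · exact hθ (by linarith)
    · exact hw h2
  have husum : ∑ a, u a = 0 := by
    simp only [hu, Matrix.mulVec, dotProduct]
    rw [Finset.sum_comm]
    rw [Finset.sum_congr rfl fun e (_ : e ∈ Finset.univ) => show
      ∑ a, eB G a e * w e = 2 * w e by rw [← Finset.sum_mul, eB_colsum]]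
    rw [← Finset.mul_sum, hS, mul_zero]
  refine ⟨u, hu0, husum, ?_⟩
  have h6 : (eB G * (eB G)ᵀ).mulVec u = (θ + 2) • u := by
    rw [← Matrix.mulVec_mulVec, BtB_mulVec G h, Matrix.mulVec_smul]

  rw [BBt G hreg, Matrix.add_mulVec, Matrix.smul_mulVec, idM_mulVec] at h6
  funext a
  have := congrFun h6 a
  simp only [Pi.add_apply, Pi.smul_apply, smul_eq_mul] at this ⊢
  linarith

lemma line_rowsum {k : ℕ} (hreg : G.IsRegularOfDegree k) (e : ↥G.edgeSet) :
    ∑ f, adjM (G.lineGraph) e f = 2 * (k : ℝ) - 2 := by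
  have h1 : ∀ f, adjM (G.lineGraph) e f
      = ((eB G)ᵀ * eB G) e f - 2 * idM ↥G.edgeSet e f := by
    intro f
    rw [BtB]
    simp only [Matrix.add_apply, Matrix.smul_apply, smul_eq_mul]
    ring
  rw [Finset.sum_congr rfl fun f _ => h1 f, Finset.sum_sub_distrib]
  have h2 : ∑ f, ((eB G)ᵀ * eB G) e f = 2 * (k:ℝ) := by
    simp only [Matrix.mul_apply, Matrix.transpose_apply]
    rw [Finset.sum_comm]
    rw [Finset.sum_congr rfl fun a (_ : a ∈ Finset.univ) => show
      ∑ f, eB G a e * eB G a f = eB G a e * (G.degree a : ℝ) by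
        rw [← Finset.mul_sum, eB_rowsum]]
    rw [Finset.sum_congr rfl fun a (_ : a ∈ Finset.univ) => by rw [hreg a]]
    rw [← Finset.sum_mul, eB_colsum]
  have h3 : ∑ f, idM ↥G.edgeSet e f = 1 := by
    have := congrFun (idM_mulVec (fun _ : ↥G.edgeSet => (1:ℝ))) e
    simpa [Matrix.mulVec, dotProduct] using this
  rw [h2, ← Finset.mul_sum, h3]
  ring

lemma line_regular {k : ℕ} (hk : 1 ≤ k) (hreg : G.IsRegularOfDegree k) :
    (G.lineGraph).IsRegularOfDegree (2 * k - 2) := by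
  apply regular_of_rowsum
  intro e
  rw [line_rowsum G hreg e]
  have : ((2 * k - 2 : ℕ) : ℝ) = 2 * (k : ℝ) - 2 := by
    have : 2 ≤ 2 * k := by omega
    push_cast [Nat.cast_sub this]
    ring
  rw [this]

end E

section F
variable {V : Type*} [Fintype V] (G : SimpleGraph V)

lemma compl_rowsum (a : V) :
    ∑ b, adjM Gᶜ a b = (Fintype.card V : ℝ) - 1 - ∑ b, adjM G a b := by
  have h := adjM_compl_mulVec G (fun _ => (1:ℝ)) a
  simp only [Matrix.mulVec, dotProduct, mul_one] at h
  simpa [Finset.card_univ] using h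

lemma compl_regular {kc k : ℕ} (hreg : G.IsRegularOfDegree k)
    (hkc : kc + k + 1 = Fintype.card V) : Gᶜ.IsRegularOfDegree kc := by
  apply regular_of_rowsum
  intro a
  rw [compl_rowsum, rowsum_of_regular G hreg]
  have : (Fintype.card V : ℝ) = (kc : ℝ) + k + 1 := by exact_mod_cast hkc.symm
  rw [this]; ring

end F

section G
variable {V : Type*} [Fintype V] (H : SimpleGraph V) [Fintype ↥H.edgeSet]

lemma edgeSet_nonempty {r : ℕ} (hreg : H.IsRegularOfDegree r) (hr : 1 ≤ r)
    (hV : Nonempty V) : Nonempty ↥H.edgeSet := by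
  obtain ⟨a⟩ := hV
  have hpos : 0 < (H.neighborFinset a).card := by
    rw [card_neighborFinset_eq_degree, hreg a]; omega
  obtain ⟨b, hb⟩ := Finset.card_pos.mp hpos
  rw [mem_neighborFinset] at hb
  exact ⟨⟨s(a, b), (H.mem_edgeSet).mpr hb⟩⟩

lemma compl_line_adj_of_avoid {e g : ↥H.edgeSet} {α β : V}
    (he : (e : Sym2 V) = s(α, β)) (hα : α ∉ (g : Sym2 V)) (hβ : β ∉ (g : Sym2 V)) :
    ((H.lineGraph)ᶜ).Adj e g := by
  rw [compl_adj]
  constructor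
  · intro hEq
    apply hα
    rw [← hEq, he]
    exact Sym2.mem_mk_left α β
  · rw [lineGraph_adj_iff_exists]
    rintro ⟨-, c, hc1, hc2⟩
    rw [he, Sym2.mem_iff] at hc1
    rcases hc1 with rfl | rfl
    · exact hα hc2
    · exact hβ hc2

lemma exists_middle {r : ℕ} (hreg : H.IsRegularOfDegree r) (hr : 2 ≤ r)
    (hrN : r + 3 ≤ Fintype.card V) (e f : ↥H.edgeSet) (hne : e ≠ f)
    (hnadj : ¬ ((H.lineGraph)ᶜ).Adj e f) :
    ∃ g, ((H.lineGraph)ᶜ).Adj e g ∧ ((H.lineGraph)ᶜ).Adj g f := by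
  classical
  -- e and f share a vertex v
  have hladj : (H.lineGraph).Adj e f := by
    by_contra h
    exact hnadj ((compl_adj _ _ _).mpr ⟨hne, h⟩)
  rw [lineGraph_adj_iff_exists] at hladj
  obtain ⟨-, v, hv1, hv2⟩ := hladj
  set x := Sym2.Mem.other hv1 with hx
  set y := Sym2.Mem.other hv2 with hy
  have hex : (e : Sym2 V) = s(v, x) := (Sym2.other_spec hv1).symm
  have hfy : (f : Sym2 V) = s(v, y) := (Sym2.other_spec hv2).symm
  have hxv : x ≠ v := Sym2.other_ne (H.not_isDiag_of_mem_edgeSet e.2) hv1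
  have hyv : y ≠ v := Sym2.other_ne (H.not_isDiag_of_mem_edgeSet f.2) hv2
  have hxmem : x ∈ (e : Sym2 V) := by rw [hex]; exact Sym2.mem_mk_right v x
  have hymem : y ∈ (f : Sym2 V) := by rw [hfy]; exact Sym2.mem_mk_right v y
  have hxy : x ≠ y := by
    intro hEq
    apply hne
    apply Subtype.ext
    rw [hex, hfy, hEq]
  -- the set of edges touching {v, x, y}
  set T := H.incidenceFinset v ∪ H.incidenceFinset x ∪ H.incidenceFinset y with hT
  have hsubE : T ⊆ H.edgeFinset := by
    intro g hg
    simp only [hT, Finset.mem_union, mem_incidenceFinset] at hg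
    rw [mem_edgeFinset]
    rcases hg with (hg | hg) | hg <;> exact hg.1
  have hcard_inc : ∀ a : V, (H.incidenceFinset a).card = r := by
    intro a
    rw [card_incidenceFinset_eq_degree, hreg a]
  have heinc : (e : Sym2 V) ∈ H.incidenceFinset x := by
    rw [mem_incidenceFinset]
    exact ⟨e.2, hxmem⟩
  have hfinc : (f : Sym2 V) ∈ H.incidenceFinset y := by
    rw [mem_incidenceFinset]
    exact ⟨f.2, hymem⟩
  have hTeq : T = H.incidenceFinset v ∪
      ((H.incidenceFinset x).erase (e : Sym2 V) ∪ (H.incidenceFinset y).erase (f : Sym2 V)) := by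
    ext g
    simp only [hT, Finset.mem_union, Finset.mem_erase, mem_incidenceFinset]
    constructor
    · rintro ((hg | hg) | hg)
      · exact Or.inl hg
      · by_cases hge : g = (e : Sym2 V)
        · subst hge
          exact Or.inl ⟨e.2, hv1⟩
        · exact Or.inr (Or.inl ⟨hge, hg⟩)
      · by_cases hgf : g = (f : Sym2 V)
        · subst hgf
          exact Or.inl ⟨f.2, hv2⟩
        · exact Or.inr (Or.inr ⟨hgf, hg⟩)
    · rintro (hg | (⟨-, hg⟩ | ⟨-, hg⟩))
      · exact Or.inl (Or.inl hg)
      · exact Or.inl (Or.inr hg)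
      · exact Or.inr hg
  have hcardT : T.card + 2 ≤ 3 * r := by
    have h1 := Finset.card_union_le (H.incidenceFinset v)
      ((H.incidenceFinset x).erase (e : Sym2 V) ∪ (H.incidenceFinset y).erase (f : Sym2 V))
    have h2 := Finset.card_union_le ((H.incidenceFinset x).erase (e : Sym2 V))
      ((H.incidenceFinset y).erase (f : Sym2 V))
    have h3 := Finset.card_erase_of_mem heinc
    have h4 := Finset.card_erase_of_mem hfinc
    rw [hcard_inc] at h3 h4
    rw [hTeq]
    have h5 := hcard_inc v
    omega
  -- total edge count
  have htot : 2 * H.edgeFinset.card = Fintype.card V * r := by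
    rw [edgeFinset_card]
    exact two_mul_card_edges H hreg
  have hlt : T.card < H.edgeFinset.card := by
    nlinarith [hrN, hr, hcardT, htot]
  have hnsub : ¬ H.edgeFinset ⊆ T := fun hsub =>
    absurd (Finset.card_le_card hsub) (not_le.mpr hlt)
  obtain ⟨g, hgE, hgT⟩ := Finset.not_subset.mp hnsub
  have hgEdge : g ∈ H.edgeSet := mem_edgeFinset.mp hgE
  have havoid : ∀ a : V, a ∈ g → a ∉ ({v, x, y} : Set V) := by
    intro a ha hmem
    apply hgT
    simp only [hT, Finset.mem_union, mem_incidenceFinset]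
    rcases hmem with rfl | rfl | rfl
    · exact Or.inl (Or.inl ⟨hgEdge, ha⟩)
    · exact Or.inl (Or.inr ⟨hgEdge, ha⟩)
    · exact Or.inr ⟨hgEdge, ha⟩
  refine ⟨⟨g, hgEdge⟩, ?_, ?_⟩
  · exact compl_line_adj_of_avoid H hex
      (fun h => havoid v h (by simp)) (fun h => havoid x h (by simp))
  · exact (compl_line_adj_of_avoid H hfy
      (fun h => havoid v h (by simp)) (fun h => havoid y h (by simp))).symm

end G

section G2
variable {V : Type*} [Fintype V] (H : SimpleGraph V) [Fintype ↥H.edgeSet]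

lemma conn_and_diam {r : ℕ} (hreg : H.IsRegularOfDegree r) (hr : 2 ≤ r)
    (hrN : r + 3 ≤ Fintype.card V) :
    ((H.lineGraph)ᶜ).Connected ∧ ((H.lineGraph)ᶜ).diam ≤ 3 := by
  have hV : Nonempty V := Fintype.card_pos_iff.mp (by omega)
  have hne : Nonempty ↥H.edgeSet := edgeSet_nonempty H hreg (by omega) hV
  have hstep : ∀ e f : ↥H.edgeSet, ((H.lineGraph)ᶜ).edist e f ≤ 2 := by
    intro e f
    by_cases hef : e = f
    · subst hef; simp [edist_self]
    · by_cases hadj : ((H.lineGraph)ᶜ).Adj e f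
      · have := edist_le (Walk.cons hadj Walk.nil)
        simp only [Walk.length_cons, Walk.length_nil] at this
        exact le_trans this (by norm_num)
      · obtain ⟨g, h1, h2⟩ := exists_middle H hreg hr hrN e f hef hadj
        have := edist_le (Walk.cons h1 (Walk.cons h2 Walk.nil))
        simp only [Walk.length_cons, Walk.length_nil] at this
        exact le_trans this (by norm_num)
  constructor
  · rw [connected_iff]
    refine ⟨?_, hne⟩
    intro e f
    by_cases hef : e = f
    · subst hef; exact Reachable.refl e
    · by_cases hadj : ((H.lineGraph)ᶜ).Adj e f
      · exact hadj.reachable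
      · obtain ⟨g, h1, h2⟩ := exists_middle H hreg hr hrN e f hef hadj
        exact Reachable.trans h1.reachable h2.reachable
  · have hediam : ((H.lineGraph)ᶜ).ediam ≤ 2 := ediam_le_of_edist_le hstep
    have : ((H.lineGraph)ᶜ).diam ≤ 2 := by
      have := ENat.toNat_le_toNat hediam (by simp : (2:ℕ∞) ≠ ⊤)
      simpa [SimpleGraph.diam] using this
    omega

end G2

lemma isEigval_iff {V : Type*} [Finite V] (G : SimpleGraph V) (μ : ℝ) (i : Fintype V) :
    IsEigval G μ ↔ ∃ v : V → ℝ, v ≠ 0 ∧ (adjM G).mulVec v = μ • v := by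
  unfold IsEigval
  rw [Subsingleton.elim (Fintype.ofFinite V) i]

theorem main_step {W : Type*} [Fintype W] (G : SimpleGraph W)
    [Fintype ↥G.edgeSet] [iE2 : Fintype ↥(((G.lineGraph)ᶜ).edgeSet)]
    {k : ℕ} (hk : 2 ≤ k) (hn : 5 ≤ Fintype.card W) (hreg : G.IsRegularOfDegree k) :
    ∃ d : ℕ, 2 ≤ d ∧ 5 ≤ Fintype.card ↥(((G.lineGraph)ᶜ).edgeSet) ∧
      IsRamanujan (((G.lineGraph)ᶜ.lineGraph)ᶜ) d ∧ (((G.lineGraph)ᶜ.lineGraph)ᶜ).diam ≤ 3 := by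
  have hNk : 2 * Fintype.card ↥G.edgeSet = Fintype.card W * k := two_mul_card_edges G hreg
  set N := Fintype.card ↥G.edgeSet with hNdef
  have h5k : 5 * k ≤ Fintype.card W * k := Nat.mul_le_mul_right k hn
  have hN : 2 * k + 1 ≤ N := by omega
  have hN5 : 5 ≤ N := by omega
  have hLreg : (G.lineGraph).IsRegularOfDegree (2 * k - 2) :=
    line_regular G (by omega) hreg
  set r := N + 1 - 2 * k with hrdef
  have hr2 : 2 ≤ r := by omega
  have hrN3 : r + 3 ≤ N := by omega
  have hcardL : Fintype.card ↥G.edgeSet = N := rfl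
  have hHreg : ((G.lineGraph)ᶜ).IsRegularOfDegree r :=
    compl_regular (G.lineGraph) hLreg (by omega)
  have hMN : 2 * Fintype.card ↥(((G.lineGraph)ᶜ).edgeSet) = N * r :=
    two_mul_card_edges ((G.lineGraph)ᶜ) hHreg
  set M := Fintype.card ↥(((G.lineGraph)ᶜ).edgeSet) with hMdef
  have hM5 : 5 ≤ M := by nlinarith
  have hM2r : 2 * r + 1 ≤ M := by nlinarith
  set d := M + 1 - 2 * r with hddef
  have hd_eq : d + 2 * r = M + 1 := by omega
  -- real number facts
  have hrR : (r : ℝ) + 2 * k = N + 1 := by exact_mod_cast (by omega : r + 2 * k = N + 1)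
  have hdR : (d : ℝ) + 2 * r = M + 1 := by exact_mod_cast hd_eq
  have hMR : 2 * (M : ℝ) = N * r := by exact_mod_cast hMN
  have hN5R : (5 : ℝ) ≤ N := by exact_mod_cast hN5
  have hr2R : (2 : ℝ) ≤ r := by exact_mod_cast hr2
  have hkR : (2 : ℝ) ≤ k := by exact_mod_cast hk
  have hd2R : (2 : ℝ) ≤ d := by nlinarith
  have hd2 : 2 ≤ d := by exact_mod_cast hd2R
  have hr4d : (r : ℝ) ^ 2 ≤ 4 * ((d : ℝ) - 1) := by nlinarith
  -- regularity of R(G)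
  have hLHreg : (((G.lineGraph)ᶜ).lineGraph).IsRegularOfDegree (2 * r - 2) :=
    line_regular ((G.lineGraph)ᶜ) (by omega) hHreg
  have hRreg : ((((G.lineGraph)ᶜ).lineGraph)ᶜ).IsRegularOfDegree d :=
    compl_regular (((G.lineGraph)ᶜ).lineGraph) hLHreg (by omega)
  -- connectivity and diameter
  obtain ⟨hconn, hdiam⟩ := conn_and_diam ((G.lineGraph)ᶜ) hHreg hr2 (by omega)
  refine ⟨d, hd2, hM5, ⟨hconn, hRreg, ?_⟩, hdiam⟩
  -- the eigenvalue bound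
  intro μ hEig hμne
  rw [isEigval_iff _ _ iE2] at hEig
  obtain ⟨v, hv0, hv⟩ := hEig
  have hrow : ∀ a, ∑ b, adjM (((G.lineGraph)ᶜ).lineGraph) a b = ((2 * r - 2 : ℕ) : ℝ) :=
    rowsum_of_regular _ hLHreg
  have hcast1 : ((2 * r - 2 : ℕ) : ℝ) = 2 * (r : ℝ) - 2 := by
    have : 2 ≤ 2 * r := by omega
    push_cast [Nat.cast_sub this]; ring
  rcases compl_top_or_perp (((G.lineGraph)ᶜ).lineGraph) hrow hv hv0 with htop | hS
  · exfalso
    apply hμne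
    rw [hcast1] at htop
    have hμd : μ = (d : ℝ) := by linarith
    rw [hμd, abs_of_nonneg (by positivity)]
  · have hLHv : (adjM (((G.lineGraph)ᶜ).lineGraph)).mulVec v = (-1 - μ) • v :=
      compl_transfer _ hS hv
    have hub : -2 ≤ -1 - μ := line_eig_lb ((G.lineGraph)ᶜ) hv0 hLHv
    have hμ1 : μ ≤ 1 := by linarith
    have hsqrt1 : (1 : ℝ) ≤ Real.sqrt ((d : ℝ) - 1) := by
      have h := Real.sqrt_le_sqrt (show (1:ℝ) ≤ (d:ℝ) - 1 by linarith)
      rwa [Real.sqrt_one] at h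
    by_cases hθ : (-1 - μ) = -2
    · have : μ = 1 := by linarith
      rw [this, abs_one]
      linarith
    · obtain ⟨u, hu0, hSu, hHu⟩ :=
        line_eig_transfer ((G.lineGraph)ᶜ) hHreg hv0 hLHv hθ hS
      have hHu' : (adjM ((G.lineGraph)ᶜ)).mulVec u = (-1 - μ + 2 - (r:ℝ)) • u := hHu
      have hLGu : (adjM (G.lineGraph)).mulVec u = (-1 - (-1 - μ + 2 - (r:ℝ))) • u :=
        compl_transfer _ hSu hHu'
      have hlb2 : -2 ≤ -1 - (-1 - μ + 2 - (r:ℝ)) := line_eig_lb G hu0 hLGu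
      have hμr : -(r:ℝ) ≤ μ := by linarith
      have habs : |μ| ≤ (r : ℝ) := abs_le.mpr ⟨by linarith, by linarith⟩
      have hfin : (r : ℝ) ≤ 2 * Real.sqrt ((d:ℝ) - 1) := by
        have h1 : (r : ℝ) = Real.sqrt ((r:ℝ)^2) := (Real.sqrt_sq (by positivity)).symm
        have h2 : Real.sqrt ((r:ℝ)^2) ≤ Real.sqrt (4 * ((d:ℝ) - 1)) :=
          Real.sqrt_le_sqrt hr4d
        have h3 : Real.sqrt (4 * ((d:ℝ) - 1)) = 2 * Real.sqrt ((d:ℝ) - 1) := by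
          rw [show (4:ℝ) * ((d:ℝ) - 1) = 2^2 * ((d:ℝ) - 1) by ring,
            Real.sqrt_mul (by positivity), Real.sqrt_sq (by norm_num)]
        linarith [h1 ▸ (h3 ▸ h2)]
      linarith


end Aux

/-- A finite vertex type bundled with a simple graph on it. -/
structure FinGraph where
  carrier : Type
  [fin : Finite carrier]
  graph : SimpleGraph carrier

attribute [instance] FinGraph.fin

/-- One application of the operation `R`. -/
def RStep (p : FinGraph) : FinGraph := ⟨_, RGraph p.graph⟩

/-- The iterated operation `R^(m)(G)`. -/
def Rit {V : Type} [Finite V] (G : SimpleGraph V) (m : ℕ) : FinGraph :=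
  RStep^[m] ⟨V, G⟩

def Good (p : FinGraph) : Prop :=
  ∃ k : ℕ, 2 ≤ k ∧ 5 ≤ Nat.card p.carrier ∧ p.graph.IsRegularOfDegree k

lemma step_lemma (p : FinGraph) (h : Good p) :
    Good (RStep p) ∧ (∃ d, IsRamanujan (RStep p).graph d) ∧ (RStep p).graph.diam ≤ 3 := by
  obtain ⟨k, hk, h5, hreg⟩ := h
  letI : Fintype p.carrier := Fintype.ofFinite _
  letI iE : Fintype ↥p.graph.edgeSet := Fintype.ofFinite _
  letI iE2 : Fintype ↥(((p.graph.lineGraph)ᶜ).edgeSet) := Fintype.ofFinite _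
  have h5' : 5 ≤ Fintype.card p.carrier := by rwa [Nat.card_eq_fintype_card] at h5
  obtain ⟨d, hd2, hM5, hram, hdiam⟩ := main_step p.graph hk h5' hreg
  refine ⟨⟨d, hd2, ?_, hram.2.1⟩, ⟨d, hram⟩, hdiam⟩
  show 5 ≤ Nat.card ↥(((p.graph.lineGraph)ᶜ).edgeSet)
  rwa [Nat.card_eq_fintype_card]


theorem stmt19 {V : Type} [Fintype V] (G : SimpleGraph V) (k : ℕ)
    (hn : 5 ≤ Fintype.card V) (hk : 2 ≤ k) (hconn : G.Connected)
    (hreg : G.IsRegularOfDegree k) (m : ℕ) (hm : 1 ≤ m) :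
    (∃ d : ℕ, IsRamanujan (Rit G m).graph d) ∧ (Rit G m).graph.diam ≤ 3 := by
  have base : Good ⟨V, G⟩ := ⟨k, hk, by rw [Nat.card_eq_fintype_card]; exact hn, hreg⟩
  have good : ∀ m, Good (Rit G m) := by
    intro m
    induction m with
    | zero => exact base
    | succ n ih =>
        have hEq : Rit G (n + 1) = RStep (Rit G n) := by
          rw [Rit, Rit, Function.iterate_succ_apply']
        rw [hEq]
        exact (step_lemma _ ih).1
  obtain ⟨m', rfl⟩ : ∃ m', m = m' + 1 := ⟨m - 1, by omega⟩
  have hEq : Rit G (m' + 1) = RStep (Rit G m') := by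
    rw [Rit, Rit, Function.iterate_succ_apply']
  rw [hEq]
  exact ⟨(step_lemma _ (good m')).2.1, (step_lemma _ (good m')).2.2⟩
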